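/- The map h : F_n(S^1) → S^1 × ((0,1)^{n-1}) defined by h(x_0, x_1, ..., x_{n-1}) = (x_0, p^{-1}(x_1/x_0), ..., p^{-1}(x_{n-1}/x_0)), where p(t) = e^{2πit} and division is in ℂ, is well-defined on the configuration space (i.e., each x_k/x_0 ≠ 1 so p^{-1}(x_k/x_0) is defined) and is a local diffeomorphism onto its image S^1 × {(t_1,...,t_{n-1}) ∈ (0,1)^{n-1} : t_i pairwise distinct}. -/

import Mathlib

open Real

/-- The `n`-th configuration space of the circle. -/
abbrev ConfS1 (n : ℕ) : Type := {x : Fin n → Circle // Function.Injective x}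

/-- The map `h(x₀,…,x_{n-1}) = (x₀, p⁻¹(x₁/x₀), …, p⁻¹(x_{n-1}/x₀))`, where
`pinv` is an inverse of `p(t) = e^{2πit}` on `S¹ \ {1}` (values at `1` are junk). -/
noncomputable def hmap (n : ℕ) (hn : 0 < n) (pinv : Circle → ℝ)
    (x : Fin n → Circle) : Circle × (Fin (n - 1) → ℝ) :=
  (x ⟨0, hn⟩, fun k => pinv (x ⟨(k : ℕ) + 1, by omega⟩ / x ⟨0, hn⟩))

namespace HmapAux
open Set Function

noncomputable def e (t : ℝ) : Circle := Circle.exp (2 * π * t)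

lemma e_injOn : Set.InjOn e (Set.Ico (0:ℝ) 1) := by
  intro a ha b hb hab
  obtain ⟨m, hm⟩ := Circle.exp_eq_exp.mp hab
  have hmr : a - b = (m:ℝ) :=
    mul_left_cancel₀ (ne_of_gt Real.two_pi_pos) (by linear_combination hm)
  have h1 : (m:ℝ) < 1 := by rw [← hmr]; linarith [ha.1, ha.2, hb.1, hb.2]
  have h2 : (-1:ℝ) < (m:ℝ) := by rw [← hmr]; linarith [ha.1, ha.2, hb.1, hb.2]
  have h1' : m < 1 := by exact_mod_cast h1
  have h2' : (-1:ℤ) < m := by exact_mod_cast h2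
  have : m = 0 := by omega
  rw [this] at hmr; push_cast at hmr; linarith

lemma e_ne_one {t : ℝ} (ht : t ∈ Set.Ioo (0:ℝ) 1) : e t ≠ 1 := by
  intro h
  obtain ⟨m, hm⟩ := Circle.exp_eq_one.mp h
  have hmr : t = (m:ℝ) :=
    mul_left_cancel₀ (ne_of_gt Real.two_pi_pos) (by linear_combination hm)
  have h1 : m < 1 := by exact_mod_cast hmr ▸ ht.2
  have h2 : (0:ℤ) < m := by exact_mod_cast hmr ▸ ht.1
  omega

variable {pinv : Circle → ℝ}

lemma pinv_eq (hpinv : ∀ z : Circle, z ≠ 1 → pinv z ∈ Set.Ioo (0 : ℝ) 1 ∧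
      Circle.exp (2 * π * pinv z) = z) {z : Circle} {t : ℝ}
    (hz : z ≠ 1) (ht : t ∈ Set.Ioo (0:ℝ) 1) (he : e t = z) : pinv z = t := by
  refine e_injOn (Set.Ioo_subset_Ico_self (hpinv z hz).1) (Set.Ioo_subset_Ico_self ht) ?_
  show Circle.exp _ = Circle.exp _
  rw [(hpinv z hz).2, ← he]; rfl

lemma continuousOn_pinv (hpinv : ∀ z : Circle, z ≠ 1 → pinv z ∈ Set.Ioo (0 : ℝ) 1 ∧
      Circle.exp (2 * π * pinv z) = z) : ContinuousOn pinv {z : Circle | z ≠ 1} := by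
  haveI : Fact (0 < 2 * π) := ⟨Real.two_pi_pos⟩
  set c : Circle → ℝ := fun z =>
    ((AddCircle.equivIoc (2*π) 0 (AddCircle.homeomorphCircle'.symm z) : ℝ)) / (2*π) with hc
  have key : ∀ z : Circle, z ≠ 1 → c z ∈ Set.Ioo (0:ℝ) 1 ∧ e (c z) = z := by
    intro z hz
    set u := AddCircle.homeomorphCircle'.symm z with hu
    have hzu : AddCircle.homeomorphCircle' u = z := AddCircle.homeomorphCircle'.apply_symm_apply z
    set s := (AddCircle.equivIoc (2*π) 0 u : ℝ) with hs
    have hsmem : s ∈ Set.Ioc (0:ℝ) (0 + 2*π) := (AddCircle.equivIoc (2*π) 0 u).2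
    have hsu : ((s : ℝ) : AddCircle (2*π)) = u := by
      exact (AddCircle.equivIoc (2*π) 0).symm_apply_apply u
    have hes : Circle.exp s = z := by
      rw [← hzu, ← hsu]; rfl
    have hslt : s < 2*π := by
      rcases lt_or_eq_of_le hsmem.2 with h | h
      · linarith
      · exfalso; apply hz; rw [← hes, h]; simpa using Circle.exp_two_pi
    constructor
    · constructor
      · exact div_pos hsmem.1 Real.two_pi_pos
      · rw [div_lt_one Real.two_pi_pos]; exact hslt
    · show Circle.exp (2 * π * c z) = z
      have hcz : 2 * π * c z = s := by
        show 2 * π * (s / (2 * π)) = s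
        field_simp
      rw [hcz, hes]
  have heq : Set.EqOn pinv c {z : Circle | z ≠ 1} := by
    intro z hz
    exact pinv_eq hpinv hz (key z hz).1 (key z hz).2
  refine ContinuousOn.congr ?_ heq
  intro z hz
  have hu0 : AddCircle.homeomorphCircle'.symm z ≠ ((0:ℝ) : AddCircle (2*π)) := by
    intro h0
    apply hz
    have := AddCircle.homeomorphCircle'.apply_symm_apply z
    rw [h0] at this
    rw [← this, AddCircle.homeomorphCircle'_apply_mk, Circle.exp_zero]
  have h1 : ContinuousAt (AddCircle.equivIoc (2*π) 0) (AddCircle.homeomorphCircle'.symm z) :=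
    AddCircle.continuousAt_equivIoc (2*π) 0 hu0
  have : ContinuousAt c z := by
    apply ContinuousAt.div_const
    exact (continuous_subtype_val.continuousAt.comp
      (h1.comp AddCircle.homeomorphCircle'.symm.continuous.continuousAt))
  exact this.continuousWithinAt

noncomputable def tval (n : ℕ) (y : Circle × (Fin (n - 1) → ℝ)) (i : Fin n) : ℝ :=
  if h : (i : ℕ) = 0 then 0 else y.2 ⟨(i : ℕ) - 1, by have := i.isLt; omega⟩

noncomputable def gfun (n : ℕ) (y : Circle × (Fin (n - 1) → ℝ)) : Fin n → Circle :=
  fun i => y.1 * e (tval n y i)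

lemma tval_mem (n : ℕ) {y : Circle × (Fin (n - 1) → ℝ)} (hy : ∀ k, y.2 k ∈ Set.Ioo (0:ℝ) 1)
    (i : Fin n) : tval n y i ∈ Set.Ico (0:ℝ) 1 := by
  unfold tval
  split_ifs with h
  · exact ⟨le_refl 0, one_pos⟩
  · exact Set.Ioo_subset_Ico_self (hy _)

lemma tval_inj (n : ℕ) {y : Circle × (Fin (n - 1) → ℝ)} (hy1 : ∀ k, y.2 k ∈ Set.Ioo (0:ℝ) 1)
    (hy2 : Function.Injective y.2) : Function.Injective (tval n y) := by
  intro i j hij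
  unfold tval at hij
  split_ifs at hij with h1 h2 h2
  · exact Fin.ext (by omega)
  · exact absurd hij.symm (ne_of_gt (hy1 _).1)
  · exact absurd hij (ne_of_gt (hy1 _).1)
  · have h3 := hy2 hij
    simp only [Fin.mk.injEq] at h3
    exact Fin.ext (by omega)

lemma gfun_inj (n : ℕ) {y : Circle × (Fin (n - 1) → ℝ)} (hy1 : ∀ k, y.2 k ∈ Set.Ioo (0:ℝ) 1)
    (hy2 : Function.Injective y.2) : Function.Injective (gfun n y) := by
  intro i j hij
  exact tval_inj n hy1 hy2 <| e_injOn (tval_mem n hy1 i) (tval_mem n hy1 j) (mul_left_cancel hij)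


lemma continuous_gfun (n : ℕ) : Continuous (fun y : Circle × (Fin (n - 1) → ℝ) => gfun n y) := by
  apply continuous_pi
  intro i
  apply Continuous.mul continuous_fst
  unfold tval
  split_ifs with h
  · exact continuous_const
  · exact Circle.exp.continuous.comp (continuous_const.mul
      ((continuous_apply _).comp continuous_snd))

end HmapAux

namespace HmapAux
open Set Function

lemma isOpen_target (m : ℕ) :
    IsOpen {y : Circle × (Fin m → ℝ) |
      (∀ k, y.2 k ∈ Set.Ioo (0:ℝ) 1) ∧ Function.Injective y.2} := by
  rw [Set.setOf_and]
  apply IsOpen.inter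
  · rw [Set.setOf_forall]
    exact isOpen_iInter_of_finite fun k =>
      isOpen_Ioo.preimage ((continuous_apply k).comp continuous_snd)
  · rw [← isClosed_compl_iff]
    have : {y : Circle × (Fin m → ℝ) | Function.Injective y.2}ᶜ
        = ⋃ (i : Fin m), ⋃ (j : Fin m), ⋃ (_ : i ≠ j), {y | y.2 i = y.2 j} := by
      ext y
      simp only [Set.mem_compl_iff, Set.mem_setOf_eq, Set.mem_iUnion, Function.not_injective_iff]
      tauto
    rw [this]
    exact isClosed_iUnion_of_finite fun i => isClosed_iUnion_of_finite fun j =>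
      isClosed_iUnion_of_finite fun _ => isClosed_eq ((continuous_apply i).comp continuous_snd)
        ((continuous_apply j).comp continuous_snd)

variable {pinv : Circle → ℝ}

lemma quot_ne_one (n : ℕ) (hn : 0 < n) (x : ConfS1 n) (k : Fin (n - 1)) :
    (x : Fin n → Circle) ⟨(k : ℕ) + 1, by have := k.isLt; omega⟩ /
      (x : Fin n → Circle) ⟨0, hn⟩ ≠ 1 := by
  intro h
  exact absurd (congrArg Fin.val (x.2 (div_eq_one.mp h))) (by simp)

lemma hmap_mem (n : ℕ) (hn : 0 < n)
    (hpinv : ∀ z : Circle, z ≠ 1 → pinv z ∈ Set.Ioo (0 : ℝ) 1 ∧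
      Circle.exp (2 * π * pinv z) = z) (x : ConfS1 n) :
    hmap n hn pinv x.1 ∈ {y : Circle × (Fin (n - 1) → ℝ) |
      (∀ k, y.2 k ∈ Set.Ioo (0:ℝ) 1) ∧ Function.Injective y.2} := by
  constructor
  · intro k
    exact (hpinv _ (quot_ne_one n hn x k)).1
  · intro k j hkj
    have h1 := (hpinv _ (quot_ne_one n hn x k)).2
    have h2 := (hpinv _ (quot_ne_one n hn x j)).2
    simp only [hmap] at hkj
    rw [hkj] at h1
    have h3 := x.2 (div_left_injective (h1.symm.trans h2))
    have h4 := congrArg Fin.val h3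
    simp only [Fin.mk.injEq] at h4 ⊢
    exact Fin.ext (by omega)

lemma e_zero : e 0 = 1 := by
  show Circle.exp _ = 1
  rw [mul_zero, Circle.exp_zero]

lemma gfun_hmap (n : ℕ) (hn : 0 < n)
    (hpinv : ∀ z : Circle, z ≠ 1 → pinv z ∈ Set.Ioo (0 : ℝ) 1 ∧
      Circle.exp (2 * π * pinv z) = z) (x : ConfS1 n) :
    gfun n (hmap n hn pinv x.1) = x.1 := by
  funext i
  show (hmap n hn pinv x.1).1 * e (tval n (hmap n hn pinv x.1) i) = x.1 i
  unfold tval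
  split_ifs with h
  · rw [e_zero, mul_one]
    show x.1 ⟨0, hn⟩ = x.1 i
    have hidx : (⟨0, hn⟩ : Fin n) = i := Fin.ext (by simpa using h.symm)
    rw [hidx]
  · simp only [hmap]
    set k : Fin (n - 1) := ⟨(i : ℕ) - 1, by have := i.isLt; omega⟩ with hk
    have hz := quot_ne_one n hn x k
    unfold e
    rw [(hpinv _ hz).2]
    have hidx : (⟨(k : ℕ) + 1, by have := k.isLt; omega⟩ : Fin n) = i :=
      Fin.ext (by simp [hk]; omega)
    rw [hidx]
    exact mul_div_cancel _ _

lemma hmap_gfun (n : ℕ) (hn : 0 < n)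
    (hpinv : ∀ z : Circle, z ≠ 1 → pinv z ∈ Set.Ioo (0 : ℝ) 1 ∧
      Circle.exp (2 * π * pinv z) = z) (y : Circle × (Fin (n - 1) → ℝ))
    (hy1 : ∀ k, y.2 k ∈ Set.Ioo (0:ℝ) 1) (hy2 : Function.Injective y.2) :
    hmap n hn pinv (gfun n y) = y := by
  have hg0 : gfun n y ⟨0, hn⟩ = y.1 := by
    show y.1 * e (tval n y ⟨0, hn⟩) = y.1
    have : tval n y ⟨0, hn⟩ = 0 := dif_pos rfl
    rw [this, e_zero, mul_one]
  refine Prod.ext hg0 ?_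
  funext k
  show pinv (gfun n y ⟨(k : ℕ) + 1, by have := k.isLt; omega⟩ / gfun n y ⟨0, hn⟩) = y.2 k
  have hgk : gfun n y ⟨(k : ℕ) + 1, by have := k.isLt; omega⟩ = y.1 * e (y.2 k) := by
    show y.1 * e (tval n y ⟨(k : ℕ) + 1, by have := k.isLt; omega⟩) = y.1 * e (y.2 k)
    have h1 : tval n y ⟨(k : ℕ) + 1, by have := k.isLt; omega⟩
        = y.2 ⟨(k : ℕ) + 1 - 1, by have := k.isLt; omega⟩ := dif_neg (Nat.succ_ne_zero _)
    have h2 : (⟨(k : ℕ) + 1 - 1, by have := k.isLt; omega⟩ : Fin (n - 1)) = k :=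
      Fin.ext (by simp)
    rw [h1, h2]
  have hq : gfun n y ⟨(k : ℕ) + 1, by have := k.isLt; omega⟩ / gfun n y ⟨0, hn⟩ = e (y.2 k) := by
    rw [hgk, hg0]
    exact mul_div_cancel_left _ _
  rw [hq]
  exact pinv_eq hpinv (e_ne_one (hy1 k)) (hy1 k) rfl

open Classical in
noncomputable def phi (n : ℕ) (hn : 0 < n) (pinv : Circle → ℝ)
    (hpinv : ∀ z : Circle, z ≠ 1 → pinv z ∈ Set.Ioo (0 : ℝ) 1 ∧
      Circle.exp (2 * π * pinv z) = z) (x₀ : ConfS1 n) :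
    OpenPartialHomeomorph (ConfS1 n) (Circle × (Fin (n - 1) → ℝ)) where
  toFun := fun x => hmap n hn pinv x.1
  invFun := fun y => if hy : Function.Injective (gfun n y) then ⟨gfun n y, hy⟩ else x₀
  source := Set.univ
  target := {y | (∀ k, y.2 k ∈ Set.Ioo (0:ℝ) 1) ∧ Function.Injective y.2}
  map_source' := fun x _ => hmap_mem n hn hpinv x
  map_target' := fun y _ => Set.mem_univ _
  left_inv' := fun x _ => by
    simp only [gfun_hmap n hn hpinv x]
    exact dif_pos x.2
  right_inv' := fun y hy => by
    rw [dif_pos (gfun_inj n hy.1 hy.2)]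
    exact hmap_gfun n hn hpinv y hy.1 hy.2
  open_source := isOpen_univ
  open_target := isOpen_target _
  continuousOn_toFun := by
    unfold hmap
    apply ContinuousOn.prodMk
    · exact ((continuous_apply _).comp continuous_subtype_val).continuousOn
    · rw [continuousOn_pi]
      intro k
      have c0 : Continuous fun x : ConfS1 n => (x : Fin n → Circle) ⟨0, hn⟩ :=
        (continuous_apply _).comp continuous_subtype_val
      have ck : Continuous fun x : ConfS1 n =>
          (x : Fin n → Circle) ⟨(k : ℕ) + 1, by have := k.isLt; omega⟩ :=
        (continuous_apply _).comp continuous_subtype_val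
      have hf : ContinuousOn (fun x : ConfS1 n =>
          (x : Fin n → Circle) ⟨(k : ℕ) + 1, by have := k.isLt; omega⟩ /
          (x : Fin n → Circle) ⟨0, hn⟩) Set.univ := (ck.div' c0).continuousOn
      exact (continuousOn_pinv hpinv).comp hf (fun x _ => quot_ne_one n hn x k)
  continuousOn_invFun := by
    rw [continuousOn_iff_continuous_restrict]
    have : Set.domRestrict {y : Circle × (Fin (n - 1) → ℝ) |
        (∀ k, y.2 k ∈ Set.Ioo (0:ℝ) 1) ∧ Function.Injective y.2}
        (fun y => if hy : Function.Injective (gfun n y) then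
          (⟨gfun n y, hy⟩ : ConfS1 n) else x₀)
        = fun y => ⟨gfun n y.1, gfun_inj n y.2.1 y.2.2⟩ := by
      funext y
      show (if hy : Function.Injective (gfun n y.1) then (⟨gfun n y.1, hy⟩ : ConfS1 n) else x₀) = _
      rw [dif_pos (gfun_inj n y.2.1 y.2.2)]

    rw [this]
    exact Continuous.subtype_mk ((continuous_gfun n).comp continuous_subtype_val) _

end HmapAux

/-- The map `h` is well defined on the configuration space (each `x_k/x₀ ≠ 1`), and is a
local homeomorphism (local diffeomorphism) onto its image
`S¹ × {(t₁,…,t_{n-1}) ∈ (0,1)^{n-1} : tᵢ pairwise distinct}`. -/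
theorem hmap_local_homeomorphism_onto_image (n : ℕ) (hn : 0 < n)
    (pinv : Circle → ℝ)
    (hpinv : ∀ z : Circle, z ≠ 1 → pinv z ∈ Set.Ioo (0 : ℝ) 1 ∧
      Circle.exp (2 * π * pinv z) = z) :
    (∀ x : ConfS1 n, ∀ k : Fin (n - 1),
      (x : Fin n → Circle) ⟨(k : ℕ) + 1, by omega⟩ / (x : Fin n → Circle) ⟨0, hn⟩ ≠ 1) ∧
    IsLocalHomeomorph (fun x : ConfS1 n => hmap n hn pinv (x : Fin n → Circle)) ∧
    Set.range (fun x : ConfS1 n => hmap n hn pinv (x : Fin n → Circle)) =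
      {y : Circle × (Fin (n - 1) → ℝ) |
        (∀ k, y.2 k ∈ Set.Ioo (0 : ℝ) 1) ∧ Function.Injective y.2} := by
  refine ⟨fun x k => HmapAux.quot_ne_one n hn x k, ?_, ?_⟩
  · intro x₀
    exact ⟨HmapAux.phi n hn pinv hpinv x₀, Set.mem_univ _, rfl⟩
  · ext y
    simp only [Set.mem_range, Set.mem_setOf_eq]
    constructor
    · rintro ⟨x, rfl⟩
      exact HmapAux.hmap_mem n hn hpinv x
    · rintro ⟨hy1, hy2⟩
      exact ⟨⟨HmapAux.gfun n y, HmapAux.gfun_inj n hy1 hy2⟩,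
        HmapAux.hmap_gfun n hn hpinv y hy1 hy2⟩
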